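/- arXiv:1312.0191 — 5 statements merged into one kernel-verified Lean document; each statement's English description precedes it below -/
import Mathlib

section
/- Let G_1 and G_2 be nontrivial connected graphs, each with a chosen terminal vertex, and let G be their vertex-amalgamation (obtained by identifying the two terminal vertices). Then the metric dimension of G satisfies dim(G) ≥ dim(G_1) + dim(G_2) − 2. -/
open SimpleGraph

def resolves {V : Type*} (G : SimpleGraph V) (W : Finset V) : Prop :=
  ∀ u v : V, (∀ w ∈ W, G.dist u w = G.dist v w) → u = v

noncomputable def metricDim {V : Type*} [Fintype V] (G : SimpleGraph V) : ℕ :=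
  sInf {k | ∃ W : Finset V, resolves G W ∧ W.card = k}

def IsVertexAmalMap {ι V : Type*} {Vi : ι → Type*}
    (Gs : ∀ i, SimpleGraph (Vi i)) (v0 : ∀ i, Vi i)
    (G : SimpleGraph V) (v : V) (f : ∀ i, Vi i → V) : Prop :=
  (∀ i, Function.Injective (f i)) ∧
  (∀ i, f i (v0 i) = v) ∧
  (∀ i x y, G.Adj (f i x) (f i y) ↔ (Gs i).Adj x y) ∧
  (∀ i j x y, i ≠ j → f i x = f j y → f i x = v) ∧
  (∀ a : V, ∃ i x, f i x = a) ∧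
  (∀ a b : V, G.Adj a b → ∃ i x y, f i x = a ∧ f i y = b)

def IsVertexAmal {ι V : Type*} {Vi : ι → Type*}
    (Gs : ∀ i, SimpleGraph (Vi i)) (v0 : ∀ i, Vi i)
    (G : SimpleGraph V) (v : V) : Prop :=
  ∃ f, IsVertexAmalMap Gs v0 G v f

def IsEdgeAmalMap {ι V : Type*} {Vi : ι → Type*}
    (Gs : ∀ i, SimpleGraph (Vi i)) (u0 w0 : ∀ i, Vi i)
    (G : SimpleGraph V) (u w : V) (f : ∀ i, Vi i → V) : Prop :=
  (∀ i, (Gs i).Adj (u0 i) (w0 i)) ∧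
  (∀ i, Function.Injective (f i)) ∧
  (∀ i, f i (u0 i) = u) ∧
  (∀ i, f i (w0 i) = w) ∧
  (∀ i x y, G.Adj (f i x) (f i y) ↔ (Gs i).Adj x y) ∧
  (∀ i j x y, i ≠ j → f i x = f j y → f i x = u ∨ f i x = w) ∧
  (∀ a : V, ∃ i x, f i x = a) ∧
  (∀ a b : V, G.Adj a b → ∃ i x y, f i x = a ∧ f i y = b)

def IsEdgeAmal {ι V : Type*} {Vi : ι → Type*}
    (Gs : ∀ i, SimpleGraph (Vi i)) (u0 w0 : ∀ i, Vi i)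
    (G : SimpleGraph V) (u w : V) : Prop :=
  ∃ f, IsEdgeAmalMap Gs u0 w0 G u w f

section Aux

variable {ι V : Type*} {Vi : ι → Type*} {Gs : ∀ i, SimpleGraph (Vi i)} {v0 : ∀ i, Vi i}
  {G : SimpleGraph V} {v : V} {f : ∀ i, Vi i → V}

open Classical in
/-- Projection of the amalgam onto the `i`-th branch. -/
noncomputable def amalProj (f : ∀ i, Vi i → V) (v0 : ∀ i, Vi i) (i : ι) (a : V) : Vi i :=
  if h : ∃ x, f i x = a then h.choose else v0 i

lemma amalProj_f (hinj : Function.Injective (f i)) (x : Vi i) :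
    amalProj f v0 i (f i x) = x := by
  unfold amalProj
  split_ifs with h
  · exact hinj h.choose_spec
  · exact absurd ⟨x, rfl⟩ h

lemma amalProj_other (hf : IsVertexAmalMap Gs v0 G v f) {i j : ι} (hij : i ≠ j)
    {a : V} (ha : ∃ y, f j y = a) : amalProj f v0 i a = v0 i := by
  obtain ⟨y, rfl⟩ := ha
  unfold amalProj
  split_ifs with h
  · have h4 := hf.2.2.2.1 i j h.choose y hij h.choose_spec
    exact hf.1 i (h4.trans (hf.2.1 i).symm)
  · rfl

/-- The homomorphism from a branch into the amalgam. -/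
def amalHom (hf : IsVertexAmalMap Gs v0 G v f) (i : ι) : Gs i →g G :=
  ⟨f i, fun h => (hf.2.2.1 i _ _).mpr h⟩

lemma amalProj_adj (hf : IsVertexAmalMap Gs v0 G v f) {i j : ι} (hij : i ≠ j) {a b : V}
    (hab : G.Adj a b) :
    ((Gs i).Adj (amalProj f v0 i a) (amalProj f v0 i b) ∧
      amalProj f v0 j a = amalProj f v0 j b) ∨
    (amalProj f v0 i a = amalProj f v0 i b ∧
      (Gs j).Adj (amalProj f v0 j a) (amalProj f v0 j b)) ∨
    (amalProj f v0 i a = amalProj f v0 i b ∧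
      amalProj f v0 j a = amalProj f v0 j b) := by
  obtain ⟨k, x, y, hx, hy⟩ := hf.2.2.2.2.2 a b hab
  subst hx; subst hy
  have hadj : (Gs k).Adj x y := (hf.2.2.1 k x y).mp hab
  by_cases hk : k = i
  · subst hk
    left
    refine ⟨?_, ?_⟩
    · rw [amalProj_f (hf.1 k) x, amalProj_f (hf.1 k) y]; exact hadj
    · rw [amalProj_other hf hij.symm ⟨x, rfl⟩, amalProj_other hf hij.symm ⟨y, rfl⟩]
  · by_cases hk' : k = j
    · subst hk'
      right; left
      refine ⟨?_, ?_⟩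
      · rw [amalProj_other hf (Ne.symm hk) ⟨x, rfl⟩, amalProj_other hf (Ne.symm hk) ⟨y, rfl⟩]
      · rw [amalProj_f (hf.1 k) x, amalProj_f (hf.1 k) y]; exact hadj
    · right; right
      refine ⟨?_, ?_⟩
      · rw [amalProj_other hf (Ne.symm hk) ⟨x, rfl⟩, amalProj_other hf (Ne.symm hk) ⟨y, rfl⟩]
      · rw [amalProj_other hf (Ne.symm hk') ⟨x, rfl⟩, amalProj_other hf (Ne.symm hk') ⟨y, rfl⟩]

lemma amalProj_walk (hf : IsVertexAmalMap Gs v0 G v f) {i j : ι} (hij : i ≠ j) {a b : V}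
    (p : G.Walk a b) :
    ∃ (qi : (Gs i).Walk (amalProj f v0 i a) (amalProj f v0 i b))
      (qj : (Gs j).Walk (amalProj f v0 j a) (amalProj f v0 j b)),
      qi.length + qj.length ≤ p.length := by
  induction p with
  | nil => exact ⟨.nil, .nil, by simp⟩
  | cons h p ih =>
    obtain ⟨qi, qj, hlen⟩ := ih
    rcases amalProj_adj hf hij h with ⟨h1, h2⟩ | ⟨h1, h2⟩ | ⟨h1, h2⟩
    · refine ⟨.cons h1 qi, qj.copy h2.symm rfl, ?_⟩
      simp only [Walk.length_cons, Walk.length_copy]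
      omega
    · refine ⟨qi.copy h1.symm rfl, .cons h2 qj, ?_⟩
      simp only [Walk.length_cons, Walk.length_copy]
      omega
    · refine ⟨qi.copy h1.symm rfl, qj.copy h2.symm rfl, ?_⟩
      simp only [Walk.length_cons, Walk.length_copy]
      omega

lemma amal_reach_v (hf : IsVertexAmalMap Gs v0 G v f) (hconn : ∀ i, (Gs i).Connected)
    (a : V) : G.Reachable a v := by
  obtain ⟨k, x, rfl⟩ := hf.2.2.2.2.1 a
  have hr : G.Reachable (f k x) (f k (v0 k)) := ((hconn k) x (v0 k)).map (amalHom hf k)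
  rwa [hf.2.1 k] at hr

lemma amal_connected (hf : IsVertexAmalMap Gs v0 G v f) (hconn : ∀ i, (Gs i).Connected) :
    G.Connected := by
  haveI : Nonempty V := ⟨v⟩
  exact Connected.mk fun a b =>
    (amal_reach_v hf hconn a).trans (amal_reach_v hf hconn b).symm

lemma amal_dist_f (hf : IsVertexAmalMap Gs v0 G v f) (hconn : ∀ i, (Gs i).Connected)
    {i j : ι} (hij : i ≠ j) (x y : Vi i) :
    G.dist (f i x) (f i y) = (Gs i).dist x y := by
  apply le_antisymm
  · obtain ⟨p, hp⟩ := (hconn i).exists_walk_length_eq_dist x y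
    calc G.dist (f i x) (f i y) ≤ (p.map (amalHom hf i)).length := dist_le _
      _ = (Gs i).dist x y := by rw [Walk.length_map, hp]
  · obtain ⟨p, hp⟩ := (amal_connected hf hconn).exists_walk_length_eq_dist (f i x) (f i y)
    obtain ⟨qi, qj, hlen⟩ := amalProj_walk hf hij p
    have h1 : (Gs i).dist x y ≤ qi.length := by
      calc (Gs i).dist x y
          = (Gs i).dist (amalProj f v0 i (f i x)) (amalProj f v0 i (f i y)) := by
            rw [amalProj_f (hf.1 i), amalProj_f (hf.1 i)]
        _ ≤ qi.length := dist_le qi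
    omega

lemma amal_dist_cross (hf : IsVertexAmalMap Gs v0 G v f) (hconn : ∀ i, (Gs i).Connected)
    {i j : ι} (hij : i ≠ j) (x : Vi i) (y : Vi j) :
    G.dist (f i x) (f j y) = (Gs i).dist x (v0 i) + (Gs j).dist (v0 j) y := by
  have hGconn := amal_connected hf hconn
  apply le_antisymm
  · obtain ⟨p1, hp1⟩ := (hconn i).exists_walk_length_eq_dist x (v0 i)
    obtain ⟨p2, hp2⟩ := (hconn j).exists_walk_length_eq_dist (v0 j) y
    have b1 : G.dist (f i x) v ≤ (Gs i).dist x (v0 i) := by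
      rw [← hf.2.1 i]
      calc G.dist (f i x) (f i (v0 i)) ≤ (p1.map (amalHom hf i)).length := dist_le _
        _ = (Gs i).dist x (v0 i) := by rw [Walk.length_map, hp1]
    have b2 : G.dist v (f j y) ≤ (Gs j).dist (v0 j) y := by
      rw [← hf.2.1 j]
      calc G.dist (f j (v0 j)) (f j y) ≤ (p2.map (amalHom hf j)).length := dist_le _
        _ = (Gs j).dist (v0 j) y := by rw [Walk.length_map, hp2]
    have := hGconn.dist_triangle (u := f i x) (v := v) (w := f j y)
    omega
  · obtain ⟨p, hp⟩ := hGconn.exists_walk_length_eq_dist (f i x) (f j y)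
    obtain ⟨qi, qj, hlen⟩ := amalProj_walk hf hij p
    have h1 : (Gs i).dist x (v0 i) ≤ qi.length := by
      calc (Gs i).dist x (v0 i)
          = (Gs i).dist (amalProj f v0 i (f i x)) (amalProj f v0 i (f j y)) := by
            rw [amalProj_f (hf.1 i), amalProj_other hf hij ⟨y, rfl⟩]
        _ ≤ qi.length := dist_le qi
    have h2 : (Gs j).dist (v0 j) y ≤ qj.length := by
      calc (Gs j).dist (v0 j) y
          = (Gs j).dist (amalProj f v0 j (f i x)) (amalProj f v0 j (f j y)) := by
            rw [amalProj_other hf hij.symm ⟨x, rfl⟩, amalProj_f (hf.1 j)]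
        _ ≤ qj.length := dist_le qj
    omega

end Aux

theorem stmt0 {V : Type*} [Fintype V] {Vi : Fin 2 → Type*} [∀ i, Fintype (Vi i)]
    (Gs : ∀ i, SimpleGraph (Vi i)) (hconn : ∀ i, (Gs i).Connected)
    (hnontriv : ∀ i, Nontrivial (Vi i))
    (v0 : ∀ i, Vi i) (G : SimpleGraph V) (v : V)
    (h : IsVertexAmal Gs v0 G v) :
    (metricDim G : ℤ) ≥ (∑ i, (metricDim (Gs i) : ℤ)) - 2 := by
  classical
  obtain ⟨f, hf⟩ := h
  have hGconn : G.Connected := amal_connected hf hconn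
  -- the defining set for metricDim G is nonempty
  have huniv : resolves G (Finset.univ : Finset V) := by
    intro u u' hd
    have h0 := hd u (Finset.mem_univ u)
    rw [SimpleGraph.dist_self] at h0
    exact (hGconn.dist_eq_zero_iff.mp h0.symm).symm
  have hmem : metricDim G ∈ {k | ∃ W : Finset V, resolves G W ∧ W.card = k} :=
    Nat.sInf_mem ⟨_, Finset.univ, huniv, rfl⟩
  obtain ⟨W, hW, hWcard⟩ := hmem
  set S : Fin 2 → Finset V := fun i => W.filter (fun a => a ≠ v ∧ ∃ x, f i x = a) with hS
  -- per-branch resolving sets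
  have key : ∀ i j : Fin 2, i ≠ j →
      metricDim (Gs i) ≤ (S i).card + 1 := by
    intro i j hij
    have hres : resolves (Gs i) (insert (v0 i) ((S i).image (amalProj f v0 i))) := by
      intro u u' hd
      apply hf.1 i
      apply hW
      intro w hw
      obtain ⟨k, x, rfl⟩ := hf.2.2.2.2.1 w
      by_cases hki : ∃ z, f i z = f k x
      · obtain ⟨z, hz⟩ := hki
        rw [← hz, amal_dist_f hf hconn hij, amal_dist_f hf hconn hij]
        apply hd z
        by_cases hv' : f i z = v
        · have hz0 : z = v0 i := hf.1 i (hv'.trans (hf.2.1 i).symm)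
          rw [hz0]; exact Finset.mem_insert_self _ _
        · apply Finset.mem_insert_of_mem
          have hmemS : f i z ∈ S i := by
            rw [hS]
            simp only [Finset.mem_filter]
            exact ⟨hz ▸ hw, hv', ⟨z, rfl⟩⟩
          have : amalProj f v0 i (f i z) = z := amalProj_f (hf.1 i) z
          exact this ▸ Finset.mem_image_of_mem _ hmemS
      · have hki' : i ≠ k := by rintro rfl; exact hki ⟨x, rfl⟩
        rw [amal_dist_cross hf hconn hki', amal_dist_cross hf hconn hki']
        have := hd (v0 i) (Finset.mem_insert_self _ _)
        omega
    calc metricDim (Gs i) ≤ (insert (v0 i) ((S i).image (amalProj f v0 i))).card :=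
          Nat.sInf_le ⟨_, hres, rfl⟩
      _ ≤ ((S i).image (amalProj f v0 i)).card + 1 := Finset.card_insert_le _ _
      _ ≤ (S i).card + 1 := by
          have := Finset.card_image_le (s := S i) (f := amalProj f v0 i)
          omega
  -- the two filtered sets are disjoint subsets of W
  have hdisj : Disjoint (S 0) (S 1) := by
    rw [Finset.disjoint_left]
    intro a h0 h1
    rw [hS] at h0 h1
    simp only [Finset.mem_filter] at h0 h1
    obtain ⟨-, hav, x, hx⟩ := h0
    obtain ⟨-, -, y, hy⟩ := h1
    exact hav (hx ▸ hf.2.2.2.1 0 1 x y (by decide) (hx.trans hy.symm))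
  have hcards : (S 0).card + (S 1).card ≤ W.card := by
    rw [← Finset.card_union_of_disjoint hdisj]
    apply Finset.card_le_card
    apply Finset.union_subset <;> exact Finset.filter_subset _ _
  have h0 := key 0 1 (by decide)
  have h1 := key 1 0 (by decide)
  rw [Fin.sum_univ_two]
  have : metricDim (Gs 0) + metricDim (Gs 1) ≤ metricDim G + 2 := by omega
  omega
end

section
/- Let G_1,…,G_n be a finite collection of connected graphs, each with a chosen terminal vertex, and let G be their vertex-amalgamation. Then dim(G) ≥ (Σ_{i=1}^n dim(G_i)) − n. -/
open SimpleGraph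

section Aux
variable {ι V : Type*} {Vi : ι → Type*}
  {Gs : ∀ i, SimpleGraph (Vi i)} {v0 : ∀ i, Vi i}
  {G : SimpleGraph V} {v : V} {f : ∀ i, Vi i → V}
  (hconn : ∀ i, (Gs i).Connected)
  (hinj : ∀ i, Function.Injective (f i))
  (hv0 : ∀ i, f i (v0 i) = v)
  (hadj : ∀ i x y, G.Adj (f i x) (f i y) ↔ (Gs i).Adj x y)
  (hdisj : ∀ i j x y, i ≠ j → f i x = f j y → f i x = v)
  (hsurj : ∀ a : V, ∃ i x, f i x = a)
  (hedge : ∀ a b : V, G.Adj a b → ∃ i x y, f i x = a ∧ f i y = b)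

include hadj in
lemma amal_reach (i : ι) (x y : Vi i) (hr : (Gs i).Reachable x y) :
    ∃ p : G.Walk (f i x) (f i y), p.length = (Gs i).dist x y := by
  obtain ⟨p, hp⟩ := hr.exists_walk_length_eq_dist
  exact ⟨p.map ⟨f i, fun h => (hadj i _ _).mpr h⟩, by simp [hp]⟩

include hconn hadj in
lemma amal_dist_le (i : ι) (x y : Vi i) :
    G.dist (f i x) (f i y) ≤ (Gs i).dist x y := by
  obtain ⟨p, hp⟩ := amal_reach hadj i x y ((hconn i).preconnected x y)
  exact hp ▸ dist_le p

include hconn hinj hv0 hadj hdisj hedge in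
lemma amal_walkD {a b : V} (p : G.Walk a b) (i : ι) (y : Vi i) (hb : f i y = b) :
    (∀ x, f i x = a → (Gs i).dist x y ≤ p.length) ∧
    ((∀ x, f i x ≠ a) → (Gs i).dist (v0 i) y ≤ p.length) := by
  classical
  induction p with
  | nil =>
    refine ⟨fun x hx => ?_, fun hno => absurd hb (hno y)⟩
    have : x = y := hinj i (hx.trans hb.symm)
    simp [this]
  | @cons a a' b hA q ih =>
    obtain ⟨j, x', y', hx', hy'⟩ := hedge a a' hA
    have ihy := ih hb
    have hlen : (Walk.cons hA q).length = q.length + 1 := by simp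
    -- helper for the case a = v
    have hcase_v : a = v → (Gs i).dist (v0 i) y ≤ q.length + 1 := by
      intro hav
      by_cases hex : ∃ x₂, f i x₂ = a'
      · obtain ⟨x₂, hx₂⟩ := hex
        have hadj2 : (Gs i).Adj (v0 i) x₂ := by
          refine (hadj i (v0 i) x₂).mp ?_
          rw [hv0 i, hx₂, ← hav]; exact hA
        have h1 := ihy.1 x₂ hx₂
        calc (Gs i).dist (v0 i) y ≤ (Gs i).dist (v0 i) x₂ + (Gs i).dist x₂ y :=
              (hconn i).dist_triangle
          _ ≤ 1 + q.length := by
              have : (Gs i).dist (v0 i) x₂ ≤ 1 := dist_le hadj2.toWalk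
              omega
          _ ≤ q.length + 1 := by omega
      · push_neg at hex
        have := ihy.2 hex
        omega
    rw [hlen]
    constructor
    · intro x hx
      by_cases hji : j = i
      · subst hji
        have hadjxy' : (Gs j).Adj x y' := (hadj j x y').mp (by rw [hx, hy']; exact hA)
        have h1 := ihy.1 y' hy'
        calc (Gs j).dist x y ≤ (Gs j).dist x y' + (Gs j).dist y' y := (hconn j).dist_triangle
          _ ≤ 1 + q.length := by
              have : (Gs j).dist x y' ≤ 1 := dist_le hadjxy'.toWalk
              omega
          _ ≤ q.length + 1 := by omega
      · have hav : a = v := by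
          rw [← hx']; exact hdisj j i x' x (fun h => hji h) (hx'.trans hx.symm)
        have hxv0 : x = v0 i := hinj i (by rw [hx, hav, ← hv0 i])
        rw [hxv0]
        exact hcase_v hav
    · intro hno
      by_cases hex : ∃ x₂, f i x₂ = a'
      · obtain ⟨x₂, hx₂⟩ := hex
        -- a' adjacent to a; a not in image i. show a' = v won't be needed: use hcase?
        -- we need dist (v0 i) y ≤ len+1. j ≠ i since f j x' = a not in image i
        have hji : j ≠ i := fun h => hno (h ▸ x') (by rw [← hx']; cases h; rfl)
        have ha'v : a' = v := by
          rw [← hx₂]; exact hdisj i j x₂ y' (fun h => hji h.symm) (hx₂.trans hy'.symm)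
        have hx₂v0 : x₂ = v0 i := hinj i (by rw [hx₂, ha'v, ← hv0 i])
        have := ihy.1 x₂ hx₂
        rw [hx₂v0] at this
        omega
      · push_neg at hex
        have := ihy.2 hex
        omega

include hconn hinj hv0 hadj hdisj hedge in
lemma amal_dist_eq (i : ι) (x y : Vi i) :
    G.dist (f i x) (f i y) = (Gs i).dist x y := by
  refine le_antisymm (amal_dist_le hconn hadj i x y) ?_
  obtain ⟨p, hp⟩ := amal_reach hadj i x y ((hconn i).preconnected x y)
  have hr : G.Reachable (f i x) (f i y) := ⟨p⟩
  obtain ⟨q, hq⟩ := hr.exists_walk_length_eq_dist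
  have := (amal_walkD hconn hinj hv0 hadj hdisj hedge q i y rfl).1 x rfl
  omega

include hconn hinj hv0 hadj hdisj hsurj hedge in
omit hinj hdisj hedge in
lemma amal_preconn : G.Preconnected := by
  intro a b
  obtain ⟨i, x, rfl⟩ := hsurj a
  obtain ⟨j, z, rfl⟩ := hsurj b
  have h1 : G.Reachable (f i x) v := by
    obtain ⟨p, _⟩ := amal_reach hadj i x (v0 i) ((hconn i).preconnected x (v0 i))
    rw [hv0 i] at p
    exact ⟨p⟩
  have h2 : G.Reachable (f j z) v := by
    obtain ⟨p, _⟩ := amal_reach hadj j z (v0 j) ((hconn j).preconnected z (v0 j))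
    rw [hv0 j] at p
    exact ⟨p⟩
  exact h1.trans h2.symm

include hconn hinj hv0 hadj hdisj hedge in
lemma amal_walkE {a b : V} (p : G.Walk a b) (i : ι) (x : Vi i) (ha : f i x = a)
    (hb : ∀ z, f i z ≠ b) :
    (Gs i).dist x (v0 i) + G.dist v b ≤ p.length := by
  classical
  induction p generalizing x with
  | nil => exact absurd ha (ha ▸ hb x)
  | @cons a a' b hA q ih =>
    obtain ⟨j, x', y', hx', hy'⟩ := hedge a a' hA
    have hlen : (Walk.cons hA q).length = q.length + 1 := by simp
    rw [hlen]
    by_cases hex : ∃ x₂, f i x₂ = a'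
    · obtain ⟨x₂, hx₂⟩ := hex
      have hadj2 : (Gs i).Adj x x₂ := (hadj i x x₂).mp (by rw [ha, hx₂]; exact hA)
      have h2 : (Gs i).dist x₂ (v0 i) + G.dist v b ≤ q.length := ih x₂ hx₂ hb
      have ht : (Gs i).dist x (v0 i) ≤ (Gs i).dist x x₂ + (Gs i).dist x₂ (v0 i) :=
        (hconn i).dist_triangle
      have h1 : (Gs i).dist x x₂ ≤ 1 := dist_le hadj2.toWalk
      omega
    · push_neg at hex
      have hji : j ≠ i := fun h => hex (h ▸ y') (by rw [← hy']; cases h; rfl)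
      have hav : a = v := by
        rw [← hx']; exact hdisj j i x' x (fun h => hji h) (hx'.trans ha.symm)
      have hxv0 : x = v0 i := hinj i (by rw [ha, hav, ← hv0 i])
      have hd0 : (Gs i).dist x (v0 i) = 0 := by rw [hxv0]; simp
      have : G.dist v b ≤ q.length + 1 := by
        rw [← hav]
        exact le_trans (dist_le (Walk.cons hA q)) (by omega)
      omega

include hconn hinj hv0 hadj hdisj hsurj hedge in
lemma amal_cross (i : ι) (x : Vi i) (w : V) (hw : ∀ z, f i z ≠ w) :
    G.dist (f i x) w = (Gs i).dist x (v0 i) + G.dist v w := by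
  have hpre := amal_preconn hconn hv0 hadj hsurj
  refine le_antisymm ?_ ?_
  · have htri : G.dist (f i x) w ≤ G.dist (f i x) v + G.dist v w :=
      Connected.dist_triangle (by haveI : Nonempty V := ⟨v⟩; exact ⟨hpre⟩)
    have : G.dist (f i x) v = (Gs i).dist x (v0 i) := by
      rw [← hv0 i]
      exact amal_dist_eq hconn hinj hv0 hadj hdisj hedge i x (v0 i)
    omega
  · obtain ⟨q, hq⟩ := (hpre (f i x) w).exists_walk_length_eq_dist
    have := amal_walkE hconn hinj hv0 hadj hdisj hedge q i x rfl hw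
    omega

end Aux

theorem stmt1 {V : Type*} [Fintype V] (n : ℕ) (hn : 1 ≤ n)
    {Vi : Fin n → Type*} [∀ i, Fintype (Vi i)]
    (Gs : ∀ i, SimpleGraph (Vi i)) (hconn : ∀ i, (Gs i).Connected)
    (v0 : ∀ i, Vi i) (G : SimpleGraph V) (v : V)
    (h : IsVertexAmal Gs v0 G v) :
    (metricDim G : ℤ) ≥ (∑ i, (metricDim (Gs i) : ℤ)) - n := by
  classical
  obtain ⟨f, hinj, hv0, hadj, hdisj, hsurj, hedge⟩ := h
  have hpre := amal_preconn hconn hv0 hadj hsurj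
  haveI : Nonempty V := ⟨v⟩
  have hGconn : G.Connected := ⟨hpre⟩
  have hne : {k | ∃ W : Finset V, resolves G W ∧ W.card = k}.Nonempty := by
    refine ⟨(Finset.univ : Finset V).card, Finset.univ, ?_, rfl⟩
    intro u w h'
    have h0 := h' u (Finset.mem_univ u)
    rw [SimpleGraph.dist_self] at h0
    exact ((hGconn.dist_eq_zero_iff).mp h0.symm).symm
  obtain ⟨W, hres, hcard⟩ := Nat.sInf_mem hne
  set B : ∀ i : Fin n, Finset (Vi i) :=
    fun i => Finset.univ.filter (fun x => f i x ∈ W ∧ f i x ≠ v) with hB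
  set Wi : ∀ i : Fin n, Finset (Vi i) := fun i => insert (v0 i) (B i) with hWi
  have hresWi : ∀ i, resolves (Gs i) (Wi i) := by
    intro i x y hxy
    have hv0d : (Gs i).dist x (v0 i) = (Gs i).dist y (v0 i) :=
      hxy (v0 i) (Finset.mem_insert_self _ _)
    have key : ∀ w ∈ W, G.dist (f i x) w = G.dist (f i y) w := by
      intro w hw
      by_cases hex : ∃ z, f i z = w
      · obtain ⟨z, hz⟩ := hex
        rw [← hz, amal_dist_eq hconn hinj hv0 hadj hdisj hedge,
          amal_dist_eq hconn hinj hv0 hadj hdisj hedge]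
        by_cases hwv : w = v
        · have hz0 : z = v0 i := hinj i (by rw [hz, hwv, hv0 i])
          rw [hz0]; exact hv0d
        · refine hxy z (Finset.mem_insert_of_mem ?_)
          simp only [hB, Finset.mem_filter, Finset.mem_univ, true_and]
          exact ⟨hz ▸ hw, by rw [hz]; exact hwv⟩
      · push_neg at hex
        rw [amal_cross hconn hinj hv0 hadj hdisj hsurj hedge i x w hex,
          amal_cross hconn hinj hv0 hadj hdisj hsurj hedge i y w hex, hv0d]
    exact hinj i (hres (f i x) (f i y) key)
  set A : Fin n → Finset V := fun i => (B i).image (f i) with hA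
  have hAsub : ∀ i, A i ⊆ W.erase v := by
    intro i w hw
    simp only [hA, Finset.mem_image, hB, Finset.mem_filter, Finset.mem_univ, true_and] at hw
    obtain ⟨x, ⟨hxW, hxv⟩, rfl⟩ := hw
    exact Finset.mem_erase.mpr ⟨hxv, hxW⟩
  have hAdisj : ∀ i ∈ (Finset.univ : Finset (Fin n)), ∀ j ∈ (Finset.univ : Finset (Fin n)),
      i ≠ j → Disjoint (A i) (A j) := by
    intro i _ j _ hij
    rw [Finset.disjoint_left]
    intro w hwi hwj
    simp only [hA, Finset.mem_image, hB, Finset.mem_filter, Finset.mem_univ, true_and] at hwi hwj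
    obtain ⟨x, ⟨_, hxv⟩, hfx⟩ := hwi
    obtain ⟨y, ⟨_, _⟩, hfy⟩ := hwj
    exact hxv (hdisj i j x y hij (hfx.trans hfy.symm) ▸ hfx ▸ rfl)
  have h1 : ∀ i, metricDim (Gs i) ≤ (A i).card + 1 := by
    intro i
    have hm : metricDim (Gs i) ≤ (Wi i).card := Nat.sInf_le ⟨Wi i, hresWi i, rfl⟩
    have hc : (Wi i).card ≤ (B i).card + 1 := Finset.card_insert_le _ _
    have hcB : (A i).card = (B i).card := Finset.card_image_of_injective _ (hinj i)
    omega
  have h3 : ∑ i, (A i).card ≤ W.card := by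
    rw [← Finset.card_biUnion hAdisj]
    refine le_trans (Finset.card_le_card (Finset.biUnion_subset.mpr fun i _ => hAsub i)) ?_
    exact le_trans (Finset.card_le_card (Finset.erase_subset _ _)) le_rfl
  have hfin : ∑ i, metricDim (Gs i) ≤ metricDim G + n := by
    calc ∑ i, metricDim (Gs i) ≤ ∑ i, ((A i).card + 1) :=
          Finset.sum_le_sum fun i _ => h1 i
      _ = (∑ i, (A i).card) + n := by
          rw [Finset.sum_add_distrib, Finset.sum_const, Finset.card_univ]
          simp
      _ ≤ W.card + n := by omega
      _ = metricDim G + n := by rw [hcard]; rfl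
  rw [ge_iff_le, sub_le_iff_le_add]
  have hZ : ((∑ i, metricDim (Gs i) : ℕ) : ℤ) ≤ ((metricDim G + n : ℕ) : ℤ) :=
    Nat.cast_le.mpr hfin
  push_cast at hZ
  linarith
end

section
/- Let G_1,…,G_n be a finite collection of connected graphs, each with a chosen terminal edge, and let H be their edge-amalgamation. Then dim(H) ≥ (Σ_{i=1}^n dim(G_i)) − 2n. -/
open SimpleGraph

namespace EdgeAmalAux

variable {ι V : Type*} {Vi : ι → Type*} {Gs : ∀ i, SimpleGraph (Vi i)}
  {u0 w0 : ∀ i, Vi i} {H : SimpleGraph V} {u w : V} {f : ∀ i, Vi i → V}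

theorem walk_map (hf : IsEdgeAmalMap Gs u0 w0 H u w f) (i : ι) {x y : Vi i}
    (p : (Gs i).Walk x y) : ∃ q : H.Walk (f i x) (f i y), q.length = p.length := by
  induction p with
  | nil => exact ⟨Walk.nil, rfl⟩
  | cons h p ih =>
      obtain ⟨q, hq⟩ := ih
      exact ⟨Walk.cons ((hf.2.2.2.2.1 i _ _).mpr h) q, by simp [hq]⟩

theorem dist_map_le (hf : IsEdgeAmalMap Gs u0 w0 H u w f) (hconn : ∀ i, (Gs i).Connected)
    (i : ι) (x y : Vi i) : H.dist (f i x) (f i y) ≤ (Gs i).dist x y := by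
  obtain ⟨p, hp⟩ := ((hconn i) x y).exists_walk_length_eq_dist
  obtain ⟨q, hq⟩ := walk_map hf i p
  calc H.dist (f i x) (f i y) ≤ q.length := SimpleGraph.dist_le q
    _ = (Gs i).dist x y := by rw [hq, hp]

theorem connected (hf : IsEdgeAmalMap Gs u0 w0 H u w f) (hconn : ∀ i, (Gs i).Connected) :
    H.Connected := by
  rw [connected_iff]
  refine ⟨fun a b => ?_, ⟨u⟩⟩
  obtain ⟨i, x, rfl⟩ := hf.2.2.2.2.2.2.1 a
  obtain ⟨j, y, rfl⟩ := hf.2.2.2.2.2.2.1 b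
  have h1 : H.Reachable (f i x) (f i (u0 i)) := by
    obtain ⟨q, _⟩ := walk_map hf i ((hconn i) x (u0 i)).some
    exact ⟨q⟩
  have h2 : H.Reachable (f j (u0 j)) (f j y) := by
    obtain ⟨q, _⟩ := walk_map hf j ((hconn j) (u0 j) y).some
    exact ⟨q⟩
  rw [hf.2.2.1 i] at h1
  rw [hf.2.2.1 j] at h2
  exact h1.trans h2

/-- Master lemma: lower bounds for walks ending at a vertex of piece `i`. -/
theorem master (hf : IsEdgeAmalMap Gs u0 w0 H u w f) (hconn : ∀ i, (Gs i).Connected)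
    (i : ι) {b a : V} (p : H.Walk b a) :
    (∀ s t, f i s = b → f i t = a → (Gs i).dist s t ≤ p.length) ∧
    (∀ t, f i t = a → (∀ s, f i s ≠ b) →
      min ((Gs i).dist (u0 i) t) ((Gs i).dist (w0 i) t) ≤ p.length) := by
  obtain ⟨h0, hinj, hfu, hfw, hadj, hsep, hsurj, hedge⟩ := hf
  induction p with
  | nil =>
      refine ⟨fun s t hs ht => ?_, fun t ht hnb => absurd ht (hnb t)⟩
      have : s = t := hinj i (hs.trans ht.symm)
      simp [this]
  | @cons b c a hbc q ih =>
      constructor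
      · intro s t hs ht
        by_cases hc : ∃ y, f i y = c
        · obtain ⟨y, hy⟩ := hc
          have hadjsy : (Gs i).Adj s y := (hadj i s y).mp (by rw [hs, hy]; exact hbc)
          have h1 := ih.1 y t hy ht
          have h2 : (Gs i).dist s t ≤ (Gs i).dist s y + (Gs i).dist y t := (hconn i).dist_triangle
          have h3 : (Gs i).dist s y ≤ 1 := by
            simpa using SimpleGraph.dist_le (Walk.cons hadjsy Walk.nil)
          simp only [Walk.length_cons]
          omega
        · push_neg at hc
          obtain ⟨j, x', y', hx', hy'⟩ := hedge b c hbc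
          have hji : j ≠ i := by rintro rfl; exact hc y' hy'
          have hbu : f i s = u ∨ f i s = w :=
            hsep i j s x' (Ne.symm hji) (by rw [hs, hx'])
          have hm := ih.2 t ht hc
          have e1 : (Gs i).dist (u0 i) t ≤ (Gs i).dist (u0 i) (w0 i) + (Gs i).dist (w0 i) t :=
            (hconn i).dist_triangle
          have e2 : (Gs i).dist (w0 i) t ≤ (Gs i).dist (w0 i) (u0 i) + (Gs i).dist (u0 i) t :=
            (hconn i).dist_triangle
          have e3 : (Gs i).dist (u0 i) (w0 i) ≤ 1 := by
            simpa using SimpleGraph.dist_le (Walk.cons (h0 i) Walk.nil)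
          have e4 : (Gs i).dist (w0 i) (u0 i) ≤ 1 := by
            simpa using SimpleGraph.dist_le (Walk.cons (h0 i).symm Walk.nil)
          simp only [Walk.length_cons]
          rcases le_total ((Gs i).dist (u0 i) t) ((Gs i).dist (w0 i) t) with hle | hle
          · rw [min_eq_left hle] at hm
            rcases hbu with hbu | hbu
            · have hs' : s = u0 i := hinj i (by rw [hbu, hfu i]); subst hs'; omega
            · have hs' : s = w0 i := hinj i (by rw [hbu, hfw i]); subst hs'; omega
          · rw [min_eq_right hle] at hm
            rcases hbu with hbu | hbu
            · have hs' : s = u0 i := hinj i (by rw [hbu, hfu i]); subst hs'; omega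
            · have hs' : s = w0 i := hinj i (by rw [hbu, hfw i]); subst hs'; omega
      · intro t ht hnb
        by_cases hc : ∃ y, f i y = c
        · obtain ⟨y, hy⟩ := hc
          obtain ⟨j, x', y', hx', hy'⟩ := hedge b c hbc
          have hji : j ≠ i := by rintro rfl; exact hnb x' hx'
          have hcu : f j y' = u ∨ f j y' = w := hsep j i y' y hji (hy'.trans hy.symm)
          have h1 := ih.1 y t hy ht
          have hy2 : y = u0 i ∨ y = w0 i := by
            rcases hcu with hcu | hcu
            · exact Or.inl (hinj i (hy.trans (hy'.symm.trans (hcu.trans (hfu i).symm))))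
            · exact Or.inr (hinj i (hy.trans (hy'.symm.trans (hcu.trans (hfw i).symm))))
          simp only [Walk.length_cons]
          rcases hy2 with rfl | rfl
          · exact le_trans (min_le_left _ _) (by omega)
          · exact le_trans (min_le_right _ _) (by omega)
        · push_neg at hc
          refine le_trans (ih.2 t ht hc) ?_
          simp only [Walk.length_cons]
          omega

/-- Master lemma 2: walks from a piece-`i` vertex to a vertex outside piece `i`. -/
theorem master2 (hf : IsEdgeAmalMap Gs u0 w0 H u w f) (hconn : ∀ i, (Gs i).Connected)
    (i : ι) {b a : V} (p : H.Walk b a) :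
    (∀ t, f i t ≠ a) → ∀ s, f i s = b →
      min ((Gs i).dist s (u0 i) + H.dist u a) ((Gs i).dist s (w0 i) + H.dist w a) ≤ p.length := by
  obtain ⟨h0, hinj, hfu, hfw, hadj, hsep, hsurj, hedge⟩ := hf
  induction p with
  | nil => exact fun ha s hs => absurd hs (ha s)
  | @cons b c a' hbc q ih =>
      intro ha s hs
      by_cases hc : ∃ y, f i y = c
      · obtain ⟨y, hy⟩ := hc
        have hadjsy : (Gs i).Adj s y := (hadj i s y).mp (by rw [hs, hy]; exact hbc)
        have h1 := ih ha y hy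
        have h3 : (Gs i).dist s y ≤ 1 := by
          simpa using SimpleGraph.dist_le (Walk.cons hadjsy Walk.nil)
        have e1 : (Gs i).dist s (u0 i) ≤ (Gs i).dist s y + (Gs i).dist y (u0 i) :=
          (hconn i).dist_triangle
        have e2 : (Gs i).dist s (w0 i) ≤ (Gs i).dist s y + (Gs i).dist y (w0 i) :=
          (hconn i).dist_triangle
        simp only [Walk.length_cons]
        rcases le_total ((Gs i).dist y (u0 i) + H.dist u a')
            ((Gs i).dist y (w0 i) + H.dist w a') with hle | hle
        · rw [min_eq_left hle] at h1
          exact le_trans (min_le_left _ _) (by omega)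
        · rw [min_eq_right hle] at h1
          exact le_trans (min_le_right _ _) (by omega)
      · push_neg at hc
        obtain ⟨j, x', y', hx', hy'⟩ := hedge b c hbc
        have hji : j ≠ i := by rintro rfl; exact hc y' hy'
        have hbu : f i s = u ∨ f i s = w := hsep i j s x' (Ne.symm hji) (by rw [hs, hx'])
        rcases hbu with hbu | hbu
        · have hs' : s = u0 i := hinj i (by rw [hbu, hfu i])
          have hb : b = u := by rw [← hs, hbu]
          have hd : H.dist u a' ≤ (Walk.cons hbc q).length := by
            rw [← hb]; exact SimpleGraph.dist_le (Walk.cons hbc q)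
          subst hs'
          refine le_trans (min_le_left _ _) ?_
          simpa [SimpleGraph.dist_self] using hd
        · have hs' : s = w0 i := hinj i (by rw [hbu, hfw i])
          have hb : b = w := by rw [← hs, hbu]
          have hd : H.dist w a' ≤ (Walk.cons hbc q).length := by
            rw [← hb]; exact SimpleGraph.dist_le (Walk.cons hbc q)
          subst hs'
          refine le_trans (min_le_right _ _) ?_
          simpa [SimpleGraph.dist_self] using hd

theorem dist_eq (hf : IsEdgeAmalMap Gs u0 w0 H u w f) (hconn : ∀ i, (Gs i).Connected)
    (i : ι) (x y : Vi i) : H.dist (f i x) (f i y) = (Gs i).dist x y := by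
  refine le_antisymm (dist_map_le hf hconn i x y) ?_
  obtain ⟨p, hp⟩ := ((connected hf hconn) (f i x) (f i y)).exists_walk_length_eq_dist
  have := (master hf hconn i p).1 x y rfl rfl
  omega

theorem dist_out (hf : IsEdgeAmalMap Gs u0 w0 H u w f) (hconn : ∀ i, (Gs i).Connected)
    (i : ι) (x : Vi i) {a : V} (ha : ∀ t, f i t ≠ a) :
    H.dist (f i x) a =
      min ((Gs i).dist x (u0 i) + H.dist u a) ((Gs i).dist x (w0 i) + H.dist w a) := by
  have hH := connected hf hconn
  refine le_antisymm (le_min ?_ ?_) ?_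
  · have h1 : H.dist (f i x) a ≤ H.dist (f i x) u + H.dist u a := hH.dist_triangle
    have h2 : H.dist (f i x) u = (Gs i).dist x (u0 i) := by
      rw [← hf.2.2.1 i]; exact dist_eq hf hconn i x (u0 i)
    omega
  · have h1 : H.dist (f i x) a ≤ H.dist (f i x) w + H.dist w a := hH.dist_triangle
    have h2 : H.dist (f i x) w = (Gs i).dist x (w0 i) := by
      rw [← hf.2.2.2.1 i]; exact dist_eq hf hconn i x (w0 i)
    omega
  · obtain ⟨p, hp⟩ := (hH (f i x) a).exists_walk_length_eq_dist
    have := master2 hf hconn i p ha x rfl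
    omega

end EdgeAmalAux

theorem stmt3 {V : Type*} [Fintype V] (n : ℕ) (hn : 1 ≤ n)
    {Vi : Fin n → Type*} [∀ i, Fintype (Vi i)]
    (Gs : ∀ i, SimpleGraph (Vi i)) (hconn : ∀ i, (Gs i).Connected)
    (u0 w0 : ∀ i, Vi i) (H : SimpleGraph V) (u w : V)
    (h : IsEdgeAmal Gs u0 w0 H u w) :
    (metricDim H : ℤ) ≥ (∑ i, (metricDim (Gs i) : ℤ)) - 2 * n := by
  classical
  obtain ⟨f, hf⟩ := h
  obtain ⟨h0, hinj, hfu, hfw, hadj, hsep, hsurj, hedge⟩ := id hf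
  have hHconn : H.Connected := EdgeAmalAux.connected hf hconn
  -- the defining set for metricDim H is nonempty
  have hS : metricDim H ∈ {k | ∃ W : Finset V, resolves H W ∧ W.card = k} := by
    apply Nat.sInf_mem
    refine ⟨Finset.univ.card, Finset.univ, fun a b hab => ?_, rfl⟩
    have := hab b (Finset.mem_univ b)
    rw [SimpleGraph.dist_self] at this
    exact hHconn.dist_eq_zero_iff.mp this
  obtain ⟨W, hWres, hWcard⟩ := hS
  set A : ∀ i : Fin n, Finset (Vi i) :=
    fun i => Finset.univ.filter (fun t => f i t ∈ W ∧ f i t ≠ u ∧ f i t ≠ w) with hA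
  -- each A i ∪ {u0 i, w0 i} resolves Gs i
  have hres : ∀ i : Fin n, resolves (Gs i) (A i ∪ {u0 i, w0 i}) := by
    intro i x y hxy
    have hu0 : (Gs i).dist x (u0 i) = (Gs i).dist y (u0 i) :=
      hxy (u0 i) (by simp)
    have hw0 : (Gs i).dist x (w0 i) = (Gs i).dist y (w0 i) :=
      hxy (w0 i) (by simp)
    have key : ∀ t : Vi i, f i t ∈ W → (Gs i).dist x t = (Gs i).dist y t := by
      intro t htW
      by_cases h1 : f i t = u
      · have : t = u0 i := hinj i (by rw [h1, hfu i])
        rw [this]; exact hu0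
      by_cases h2 : f i t = w
      · have : t = w0 i := hinj i (by rw [h2, hfw i])
        rw [this]; exact hw0
      exact hxy t (Finset.mem_union_left _ (by simp [hA, htW, h1, h2]))
    apply hinj i
    apply hWres
    intro a haW
    by_cases hc : ∃ t, f i t = a
    · obtain ⟨t, rfl⟩ := hc
      rw [EdgeAmalAux.dist_eq hf hconn i x t, EdgeAmalAux.dist_eq hf hconn i y t]
      exact key t haW
    · push_neg at hc
      rw [EdgeAmalAux.dist_out hf hconn i x hc, EdgeAmalAux.dist_out hf hconn i y hc,
        hu0, hw0]
  -- dimension bound per piece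
  have hdim : ∀ i : Fin n, metricDim (Gs i) ≤ (A i).card + 2 := by
    intro i
    have h1 : metricDim (Gs i) ≤ (A i ∪ {u0 i, w0 i}).card :=
      Nat.sInf_le ⟨A i ∪ {u0 i, w0 i}, hres i, rfl⟩
    have h2 : ({u0 i, w0 i} : Finset (Vi i)).card ≤ 2 := by
      have := Finset.card_insert_le (u0 i) ({w0 i} : Finset (Vi i))
      simpa using this
    have h3 := Finset.card_union_le (A i) ({u0 i, w0 i} : Finset (Vi i))
    omega
  -- images of the A i are disjoint subsets of W
  set B : Fin n → Finset V := fun i => (A i).image (f i) with hB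
  have hBcard : ∀ i, (B i).card = (A i).card :=
    fun i => Finset.card_image_of_injective _ (hinj i)
  have hBsub : ∀ i, B i ⊆ W := by
    intro i a haB
    obtain ⟨t, htA, rfl⟩ := Finset.mem_image.mp haB
    exact ((Finset.mem_filter.mp htA).2).1
  have hdisj : ∀ i ∈ (Finset.univ : Finset (Fin n)), ∀ j ∈ Finset.univ, i ≠ j →
      Disjoint (B i) (B j) := by
    intro i _ j _ hij
    rw [Finset.disjoint_left]
    intro a hai haj
    obtain ⟨t, htA, rfl⟩ := Finset.mem_image.mp hai
    obtain ⟨s, hsA, hs⟩ := Finset.mem_image.mp haj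
    have := hsep i j t s hij hs.symm
    have h' := (Finset.mem_filter.mp htA).2
    tauto
  have hsum : ∑ i, (A i).card ≤ W.card := by
    have e1 : ∑ i, (A i).card = (Finset.univ.biUnion B).card := by
      rw [Finset.card_biUnion hdisj]
      exact Finset.sum_congr rfl fun i _ => (hBcard i).symm
    rw [e1]
    exact Finset.card_le_card (Finset.biUnion_subset.mpr fun i _ => hBsub i)
  have hfinal : ∑ i, metricDim (Gs i) ≤ W.card + 2 * n := by
    calc ∑ i, metricDim (Gs i) ≤ ∑ i, ((A i).card + 2) :=
          Finset.sum_le_sum fun i _ => hdim i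
      _ = (∑ i, (A i).card) + 2 * n := by
          rw [Finset.sum_add_distrib, Finset.sum_const, Finset.card_univ, Fintype.card_fin,
            smul_eq_mul]
          ring
      _ ≤ W.card + 2 * n := by omega
  rw [ge_iff_le, sub_le_iff_le_add]
  have h2 : ((∑ i, metricDim (Gs i) : ℕ) : ℤ) ≤ ((W.card + 2 * n : ℕ) : ℤ) := by
    exact_mod_cast hfinal
  push_cast at h2
  rw [hWcard] at h2
  linarith
end

section
/- Let G be the vertex-amalgamation of n ≥ 2 complete graphs K_{k_1},…,K_{k_n}, each of order k_i ≥ 3, at one vertex. Then dim(G) = Σ_{i=1}^n dim(K_{k_i}) − n = Σ_{i=1}^n (k_i − 2). -/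
open SimpleGraph

private lemma metricDimTopAux (m : ℕ) (hm : 2 ≤ m) :
    metricDim (⊤ : SimpleGraph (Fin m)) = m - 1 := by
  classical
  have hd1 : ∀ x y : Fin m, x ≠ y → (⊤ : SimpleGraph (Fin m)).dist x y = 1 :=
    fun x y h => SimpleGraph.dist_eq_one_iff_adj.mpr h
  have x0 : Fin m := ⟨0, by omega⟩
  set W : Finset (Fin m) := Finset.univ.erase x0 with hW
  have hres : resolves (⊤ : SimpleGraph (Fin m)) W := by
    intro u u' hu
    by_contra hne
    rcases eq_or_ne u x0 with rfl | hux
    · have hmem : u' ∈ W := Finset.mem_erase.mpr ⟨fun h => hne h.symm, Finset.mem_univ _⟩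
      have := hu u' hmem
      rw [SimpleGraph.dist_self, hd1 _ _ hne] at this
      exact Nat.one_ne_zero this
    · have hmem : u ∈ W := Finset.mem_erase.mpr ⟨hux, Finset.mem_univ _⟩
      have := hu u hmem
      rw [SimpleGraph.dist_self, hd1 _ _ (Ne.symm hne)] at this
      exact Nat.zero_ne_one this
  have hcard : W.card = m - 1 := by
    rw [hW, Finset.card_erase_of_mem (Finset.mem_univ _), Finset.card_univ, Fintype.card_fin]
  unfold metricDim
  apply le_antisymm
  · exact Nat.sInf_le ⟨W, hres, hcard⟩
  · refine le_csInf ⟨m - 1, ⟨W, hres, hcard⟩⟩ ?_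
    rintro b ⟨U, hU, rfl⟩
    by_contra hlt
    push_neg at hlt
    have h2 : 2 ≤ (Finset.univ \ U).card := by
      rw [Finset.card_sdiff_of_subset (Finset.subset_univ _), Finset.card_univ, Fintype.card_fin]
      omega
    obtain ⟨a, ha, b, hb, hab⟩ := Finset.one_lt_card.mp h2
    have hna : a ∉ U := (Finset.mem_sdiff.mp ha).2
    have hnb : b ∉ U := (Finset.mem_sdiff.mp hb).2
    refine hab (hU a b ?_)
    intro w hw
    have hwa : a ≠ w := fun h => hna (h ▸ hw)
    have hwb : b ≠ w := fun h => hnb (h ▸ hw)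
    rw [hd1 _ _ hwa, hd1 _ _ hwb]

private lemma metricDimAmalAux {V : Type*} [Fintype V] (n : ℕ) (hn : 2 ≤ n) (k : Fin n → ℕ)
    (hk : ∀ i, 3 ≤ k i)
    (v0 : ∀ i, Fin (k i)) (G : SimpleGraph V) (v : V)
    (h : IsVertexAmal (fun i => (⊤ : SimpleGraph (Fin (k i)))) v0 G v) :
    metricDim G = ∑ i, (k i - 2) := by
  classical
  obtain ⟨f, hinj, hv0, hadj, hcross, hsurj, hedge⟩ := h
  -- basic adjacency facts
  have adj_same : ∀ i (x y : Fin (k i)), x ≠ y → G.Adj (f i x) (f i y) := by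
    intro i x y hxy
    exact (hadj i x y).mpr hxy
  have hvne : ∀ i (x : Fin (k i)), x ≠ v0 i → f i x ≠ v := by
    intro i x hx he
    exact hx (hinj i (he.trans (hv0 i).symm))
  have adj_v : ∀ a, a ≠ v → G.Adj a v := by
    intro a ha
    obtain ⟨i, x, rfl⟩ := hsurj a
    rw [← hv0 i]
    exact adj_same i x (v0 i) (fun he => ha (he ▸ hv0 i))
  have reach : ∀ a b : V, G.Reachable a b := by
    have rv : ∀ a, G.Reachable a v := by
      intro a
      rcases eq_or_ne a v with rfl | ha
      · rfl
      · exact ⟨(adj_v a ha).toWalk⟩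
    exact fun a b => (rv a).trans (rv b).symm
  have dist_zero : ∀ a b : V, G.dist a b = 0 → a = b := by
    intro a b hd
    by_contra hne
    exact absurd hd (Nat.pos_iff_ne_zero.mp ((reach a b).pos_dist_of_ne hne))
  have dist1 : ∀ a b : V, G.Adj a b → G.dist a b = 1 :=
    fun a b hab => SimpleGraph.dist_eq_one_iff_adj.mpr hab
  have dist2 : ∀ a b : V, a ≠ b → ¬ G.Adj a b → G.dist a b = 2 := by
    intro a b hne hnadj
    have hav : a ≠ v := by
      rintro rfl
      exact hnadj ((adj_v b (fun hb => hne hb.symm)).symm)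
    have hbv : b ≠ v := by
      rintro rfl
      exact hnadj (adj_v a hav)
    have hle : G.dist a b ≤ 2 := by
      have := SimpleGraph.dist_le
        (SimpleGraph.Walk.cons (adj_v a hav)
          (SimpleGraph.Walk.cons (adj_v b hbv).symm SimpleGraph.Walk.nil))
      simpa using this
    have hpos : 0 < G.dist a b := (reach a b).pos_dist_of_ne hne
    have hne1 : G.dist a b ≠ 1 := fun h1 => hnadj (SimpleGraph.dist_eq_one_iff_adj.mp h1)
    omega
  have branch_unique : ∀ i j (x : Fin (k i)) (y : Fin (k j)), f i x = f j y →
      f i x ≠ v → i = j := by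
    intro i j x y he hne
    by_contra hij
    exact hne (hcross i j x y hij he)
  have dist_cross : ∀ i j (x : Fin (k i)) (y : Fin (k j)), i ≠ j →
      f i x ≠ v → f j y ≠ v → G.dist (f i x) (f j y) = 2 := by
    intro i j x y hij hxv hyv
    have hne : f i x ≠ f j y := fun he => hxv (hcross i j x y hij he)
    refine dist2 _ _ hne ?_
    intro hadj'
    obtain ⟨l, x', y', hx', hy'⟩ := hedge _ _ hadj'
    have h1 : l = i := branch_unique l i x' x hx' (by rw [hx']; exact hxv)
    have h2 : l = j := branch_unique l j y' y hy' (by rw [hy']; exact hyv)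
    exact hij (h1 ▸ h2)
  -- branch sets
  set S : Fin n → Finset V := fun i => (Finset.univ.erase (v0 i)).image (f i) with hS
  have hmemS : ∀ i a, a ∈ S i ↔ ∃ x, x ≠ v0 i ∧ f i x = a := by
    intro i a
    simp only [hS, Finset.mem_image, Finset.mem_erase, Finset.mem_univ, and_true]
  have hSne : ∀ i a, a ∈ S i → a ≠ v := by
    intro i a ha
    obtain ⟨x, hx, rfl⟩ := (hmemS i a).mp ha
    exact hvne i x hx
  have hScard : ∀ i, (S i).card = k i - 1 := by
    intro i
    rw [hS]
    rw [Finset.card_image_of_injective _ (hinj i),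
      Finset.card_erase_of_mem (Finset.mem_univ _), Finset.card_univ, Fintype.card_fin]
  have hSdisj : ∀ i j, i ≠ j → Disjoint (S i) (S j) := by
    intro i j hij
    rw [Finset.disjoint_left]
    intro a hai haj
    obtain ⟨x, hx, rfl⟩ := (hmemS i _).mp hai
    obtain ⟨y, hy, he⟩ := (hmemS j _).mp haj
    exact hvne i x hx (hcross i j x y hij he.symm)
  -- twin lemma
  have twin : ∀ i a b, a ∈ S i → b ∈ S i → a ≠ b → ∀ w, w ≠ a → w ≠ b →
      G.dist a w = G.dist b w := by
    intro i a b ha hb hab w hwa hwb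
    obtain ⟨x, hx, rfl⟩ := (hmemS i _).mp ha
    obtain ⟨y, hy, rfl⟩ := (hmemS i _).mp hb
    obtain ⟨l, z, rfl⟩ := hsurj w
    by_cases hbw : ∃ z' : Fin (k i), f i z' = f l z
    · obtain ⟨z', hz'⟩ := hbw
      have hx' : x ≠ z' := fun he => hwa (by rw [← hz', ← he])
      have hy' : y ≠ z' := fun he => hwb (by rw [← hz', ← he])
      rw [← hz', dist1 _ _ (adj_same i x z' hx'), dist1 _ _ (adj_same i y z' hy')]
    · have hlv : f l z ≠ v := by
        intro he
        exact hbw ⟨v0 i, by rw [hv0 i, he]⟩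
      have hli : i ≠ l := by
        rintro rfl
        exact hbw ⟨z, rfl⟩
      rw [dist_cross i l x z hli (hvne i x hx) hlv,
        dist_cross i l y z hli (hvne i y hy) hlv]
  -- lower bound
  have lower : ∀ U : Finset V, resolves G U → ∑ i, (k i - 2) ≤ U.card := by
    intro U hU
    have hone : ∀ i, (S i \ U).card ≤ 1 := by
      intro i
      by_contra hgt
      push_neg at hgt
      obtain ⟨a, ha, b, hb, hab⟩ := Finset.one_lt_card.mp hgt
      refine hab (hU a b ?_)
      intro w hw
      refine twin i a b (Finset.mem_sdiff.mp ha).1 (Finset.mem_sdiff.mp hb).1 hab w ?_ ?_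
      · intro he; exact (Finset.mem_sdiff.mp ha).2 (he ▸ hw)
      · intro he; exact (Finset.mem_sdiff.mp hb).2 (he ▸ hw)
    have hint : ∀ i, k i - 2 ≤ (S i ∩ U).card := by
      intro i
      have h0 := Finset.card_inter_add_card_sdiff (S i) U
      have h1 := hScard i
      have h2 := hone i
      have h3 := hk i
      omega
    calc ∑ i, (k i - 2) ≤ ∑ i, (S i ∩ U).card := Finset.sum_le_sum (fun i _ => hint i)
      _ = (Finset.univ.biUnion (fun i => S i ∩ U)).card :=
          (Finset.card_biUnion (fun i _ j _ hij =>
            (hSdisj i j hij).mono Finset.inter_subset_left Finset.inter_subset_left)).symm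
      _ ≤ U.card := Finset.card_le_card
          (Finset.biUnion_subset.mpr (fun i _ => Finset.inter_subset_right))
  -- choose distinguished vertices
  have hpq' : ∀ i, ∃ pq : Fin (k i) × Fin (k i),
      pq.1 ≠ v0 i ∧ pq.2 ≠ v0 i ∧ pq.1 ≠ pq.2 := by
    intro i
    have h2 : 1 < (Finset.univ.erase (v0 i)).card := by
      rw [Finset.card_erase_of_mem (Finset.mem_univ _), Finset.card_univ, Fintype.card_fin]
      have := hk i; omega
    obtain ⟨a, ha, b, hb, hab⟩ := Finset.one_lt_card.mp h2
    exact ⟨(a, b), (Finset.mem_erase.mp ha).1, (Finset.mem_erase.mp hb).1, hab⟩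
  choose pq hp hq hpq using hpq'
  set p : ∀ i, Fin (k i) := fun i => (pq i).1 with hpdef
  set q : ∀ i, Fin (k i) := fun i => (pq i).2 with hqdef
  set W : Finset V := Finset.univ.biUnion
      (fun i => ((Finset.univ.erase (v0 i)).erase (p i)).image (f i)) with hWdef
  have hWsub : ∀ i, ((Finset.univ.erase (v0 i)).erase (p i)).image (f i) ⊆ S i := by
    intro i
    exact Finset.image_subset_image (fun x hx => Finset.mem_of_mem_erase hx)
  have hWcard : W.card = ∑ i, (k i - 2) := by
    rw [hWdef, Finset.card_biUnion (fun i _ j _ hij =>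
      (hSdisj i j hij).mono (hWsub i) (hWsub j))]
    refine Finset.sum_congr rfl (fun i _ => ?_)
    rw [Finset.card_image_of_injective _ (hinj i),
      Finset.card_erase_of_mem (Finset.mem_erase.mpr ⟨hp i, Finset.mem_univ _⟩),
      Finset.card_erase_of_mem (Finset.mem_univ _), Finset.card_univ, Fintype.card_fin]
    omega
  have hmemW : ∀ i (x : Fin (k i)), x ≠ v0 i → x ≠ p i → f i x ∈ W := by
    intro i x h1 h2
    rw [hWdef]
    exact Finset.mem_biUnion.mpr ⟨i, Finset.mem_univ _, Finset.mem_image_of_mem _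
      (Finset.mem_erase.mpr ⟨h2, Finset.mem_erase.mpr ⟨h1, Finset.mem_univ _⟩⟩)⟩
  have hcompl : ∀ a, a ∉ W → a = v ∨ ∃ i, a = f i (p i) := by
    intro a ha
    obtain ⟨l, x, rfl⟩ := hsurj a
    rcases eq_or_ne x (v0 l) with rfl | h1
    · exact Or.inl (hv0 l)
    · rcases eq_or_ne x (p l) with rfl | h2
      · exact Or.inr ⟨l, rfl⟩
      · exact absurd (hmemW l x h1 h2) ha
  have hWres : resolves G W := by
    intro u u' hu
    by_contra hne
    have hnotW : ∀ b b' : V, b ≠ b' → (∀ w ∈ W, G.dist b w = G.dist b' w) → b ∉ W := by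
      intro b b' hbb hdists hbW
      have h0 := hdists b hbW
      rw [SimpleGraph.dist_self] at h0
      exact hbb ((dist_zero b' b h0.symm).symm)
    have huW : u ∉ W := hnotW u u' hne hu
    have huW' : u' ∉ W := hnotW u' u (Ne.symm hne) (fun w hw => (hu w hw).symm)
    have key : ∀ (b b' : V), (∀ w ∈ W, G.dist b w = G.dist b' w) →
        ∀ j, b = f j (p j) → b' = v → False := by
      intro b b' hd j hb hb'
      have hcard0 : 0 < (Finset.univ.erase j).card := by
        rw [Finset.card_erase_of_mem (Finset.mem_univ _), Finset.card_univ, Fintype.card_fin]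
        omega
      obtain ⟨l, hl⟩ := Finset.card_pos.mp hcard0
      have hlj : l ≠ j := (Finset.mem_erase.mp hl).1
      have hwW : f l (q l) ∈ W := hmemW l (q l) (hq l) (Ne.symm (hpq l))
      have h1 : G.dist b (f l (q l)) = 2 := by
        rw [hb]
        exact dist_cross j l (p j) (q l) (Ne.symm hlj) (hvne j (p j) (hp j))
          (hvne l (q l) (hq l))
      have h2 : G.dist b' (f l (q l)) = 1 := by
        rw [hb']
        exact dist1 _ _ ((adj_v _ (hvne l (q l) (hq l))).symm)
      have := hd _ hwW
      rw [h1, h2] at this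
      omega
    rcases hcompl u huW with hu0 | ⟨i, hui⟩
    · rcases hcompl u' huW' with hu0' | ⟨j, huj⟩
      · exact hne (hu0.trans hu0'.symm)
      · exact key u' u (fun w hw => (hu w hw).symm) j huj hu0
    · rcases hcompl u' huW' with hu0' | ⟨j, huj⟩
      · exact key u u' hu i hui hu0'
      · have hij : i ≠ j := by
          rintro rfl
          exact hne (hui.trans huj.symm)
        have hwW : f i (q i) ∈ W := hmemW i (q i) (hq i) (Ne.symm (hpq i))
        have h1 : G.dist u (f i (q i)) = 1 := by
          rw [hui]
          exact dist1 _ _ (adj_same i _ _ (hpq i))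
        have h2 : G.dist u' (f i (q i)) = 2 := by
          rw [huj]
          exact dist_cross j i (p j) (q i) (Ne.symm hij) (hvne j (p j) (hp j))
            (hvne i (q i) (hq i))
        have := hu _ hwW
        rw [h1, h2] at this
        omega
  unfold metricDim
  apply le_antisymm
  · exact Nat.sInf_le ⟨W, hWres, hWcard⟩
  · refine le_csInf ⟨∑ i, (k i - 2), ⟨W, hWres, hWcard⟩⟩ ?_
    rintro b ⟨U, hU, rfl⟩
    exact lower U hU


theorem stmt10 {V : Type*} [Fintype V] (n : ℕ) (hn : 2 ≤ n) (k : Fin n → ℕ)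
    (hk : ∀ i, 3 ≤ k i)
    (v0 : ∀ i, Fin (k i)) (G : SimpleGraph V) (v : V)
    (h : IsVertexAmal (fun i => (⊤ : SimpleGraph (Fin (k i)))) v0 G v) :
    (metricDim G : ℤ)
        = (∑ i, (metricDim (⊤ : SimpleGraph (Fin (k i))) : ℤ)) - n ∧
    metricDim G = ∑ i, (k i - 2) := by
  have hmain := metricDimAmalAux n hn k hk v0 G v h
  have htop : ∀ i, metricDim (⊤ : SimpleGraph (Fin (k i))) = k i - 1 :=
    fun i => metricDimTopAux (k i) (by have := hk i; omega)
  refine ⟨?_, hmain⟩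
  rw [hmain]
  have h1 : ((∑ i, (k i - 2) : ℕ) : ℤ) = ∑ i, ((k i : ℤ) - 2) := by
    rw [Nat.cast_sum]
    refine Finset.sum_congr rfl (fun i _ => ?_)
    have := hk i
    omega
  have h2 : ∀ i : Fin n, (metricDim (⊤ : SimpleGraph (Fin (k i))) : ℤ) = (k i : ℤ) - 1 := by
    intro i
    rw [htop i]
    have := hk i
    omega
  rw [h1]
  simp only [h2]
  rw [Finset.sum_sub_distrib, Finset.sum_sub_distrib, Finset.sum_const, Finset.sum_const,
    Finset.card_univ, Fintype.card_fin]
  ring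
end

section
/- Let G be the vertex-amalgamation of n ≥ 2 odd cycles C_{c_1},…,C_{c_n} (each c_i odd, c_i ≥ 3) at one vertex. Then dim(G) = n. -/
open SimpleGraph

open scoped Fin.CommRing

/-!
Each odd cycle `C_{2k+1}` is resolved by any vertex `t` together with its antipode `t + k`, and `t`
is a farthest vertex from `t + k`. In the amalgam every path between two blocks passes through the
common vertex `v`, so distances between blocks add up through `v`. Hence the `n` antipodes resolve
`G`: a vertex is located in its block by the antipode of another block (which measures its distance
to `v`) together with the antipode of its own block, and two vertices in different blocks are told
apart because the antipode of a block is never farther from that block than through `v`.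
Conversely, the two neighbours of the base vertex of a block are equidistant from every vertex
outside that block, so every resolving set meets each of the `n` disjoint sets `block i \ {v}`.
-/

theorem ZMod.eq_of_natAbs_valMinAbs_eq_of_natAbs_valMinAbs_sub_eq {m k : ℕ} (hm : m = 2 * k + 1)
    {s t : ZMod m} (h₀ : s.valMinAbs.natAbs = t.valMinAbs.natAbs)
    (hk : ((k : ZMod m) - s).valMinAbs.natAbs = ((k : ZMod m) - t).valMinAbs.natAbs) :
    s = t := by
  subst hm
  have hodd : (2 * k + 1 : ZMod (2 * k + 1)) = 0 := by exact_mod_cast ZMod.natCast_self _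
  obtain rfl | rfl := natAbs_valMinAbs_eq_natAbs_valMinAbs.1 h₀
  · rfl
  -- `|k + t| = |k - t|` forces `2 t = 0` or `2 k = 0`, and `2 k = -1`
  obtain h | h := natAbs_valMinAbs_eq_natAbs_valMinAbs.1 hk
  · linear_combination -h
  · linear_combination (-2 * t) * hodd + 2 * t * h

namespace SimpleGraph

variable {V : Type*} {G : SimpleGraph V}

theorem Walk.le_add_length_of_adj_le {u w : V} {φ : V → ℕ}
    (hφ : ∀ a b, G.Adj a b → φ b ≤ φ a + 1) (p : G.Walk u w) :
    φ w ≤ φ u + p.length := by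
  induction p with
  | nil => simp
  | cons hadj _ ih =>
    rw [Walk.length_cons]
    have := hφ _ _ hadj
    omega

theorem Reachable.le_add_dist_of_adj_le {u w : V} {φ : V → ℕ}
    (hφ : ∀ a b, G.Adj a b → φ b ≤ φ a + 1) (h : G.Reachable u w) :
    φ w ≤ φ u + G.dist u w := by
  obtain ⟨p, hp⟩ := h.exists_walk_length_eq_dist
  exact hp ▸ p.le_add_length_of_adj_le hφ

theorem cycleGraph_dist_add_natCast_le {n : ℕ} (a : Fin (n + 2)) (d : ℕ) :
    (cycleGraph (n + 2)).dist a (a + (d : Fin (n + 2))) ≤ d := by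
  induction d with
  | zero => simp
  | succ d ih =>
    have hadj : (cycleGraph (n + 2)).Adj (a + (d : Fin (n + 2)))
        (a + ((d + 1 : ℕ) : Fin (n + 2))) := cycleGraph_adj.2 (Or.inr (by push_cast; ring))
    calc _ ≤ _ + _ := cycleGraph_connected.dist_triangle (v := a + (d : Fin (n + 2)))
      _ ≤ d + 1 := add_le_add ih (dist_eq_one_iff_adj.2 hadj).le

theorem cycleGraph_dist {n : ℕ} (a b : Fin (n + 2)) :
    (cycleGraph (n + 2)).dist a b = (ZMod.finEquiv (n + 2) (b - a)).valMinAbs.natAbs := by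
  set e := ZMod.finEquiv (n + 2)
  have hone : (1 : ZMod (n + 2)).valMinAbs.natAbs = 1 := by
    rw [← Nat.cast_one, ZMod.valMinAbs_natCast_of_le_half (by omega)]; rfl
  apply le_antisymm
  · set d := (e (b - a)).valMinAbs.natAbs
    rcases Int.natAbs_eq (e (b - a)).valMinAbs with h | h
    · have hb : b = a + (d : Fin (n + 2)) := by
        rw [← sub_eq_iff_eq_add', ← e.injective.eq_iff, map_natCast,
          ← ZMod.coe_valMinAbs (e _), h, Int.cast_natCast]
      exact hb ▸ cycleGraph_dist_add_natCast_le a d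
    · have ha : a = b + (d : Fin (n + 2)) := by
        rw [← sub_eq_iff_eq_add', ← e.injective.eq_iff, map_natCast, ← neg_sub, map_neg,
          ← ZMod.coe_valMinAbs (e _), h, Int.cast_neg, neg_neg, Int.cast_natCast]
      exact dist_comm (G := cycleGraph _) ▸ ha ▸ cycleGraph_dist_add_natCast_le b d
  · have := (cycleGraph_connected (n := n + 1) a b).le_add_dist_of_adj_le
      (φ := fun x => (e (x - a)).valMinAbs.natAbs) ?_
    · simpa using this
    intro x y hxy
    calc (e (y - a)).valMinAbs.natAbs = (e (y - x) + e (x - a)).valMinAbs.natAbs := by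
          rw [← map_add, sub_add_sub_cancel]
      _ ≤ (e (y - x)).valMinAbs.natAbs + (e (x - a)).valMinAbs.natAbs :=
          (ZMod.natAbs_valMinAbs_add_le _ _).trans (Int.natAbs_add_le _ _)
      _ = _ := by
        rcases cycleGraph_adj.1 hxy with h | h
        · rw [← neg_sub, map_neg, h, map_one, ZMod.natAbs_valMinAbs_neg, hone, add_comm]
        · rw [h, map_one, hone, add_comm]

theorem cycleGraph_exists_ne_dist_eq {m : ℕ} (hm : 3 ≤ m) (t : Fin m) :
    ∃ p q, p ≠ q ∧ (cycleGraph m).dist p t = (cycleGraph m).dist q t := by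
  obtain ⟨n, rfl⟩ : ∃ n, m = n + 3 := ⟨m - 3, by omega⟩
  refine ⟨t + 1, t - 1, fun h => ?_, ?_⟩
  · have h2 : ((2 : ℕ) : ZMod (n + 3)) = 0 := by
      have := congrArg (ZMod.finEquiv (n + 3)) (sub_eq_zero.2 h)
      rw [show t + 1 - (t - 1) = 2 by ring, map_zero] at this
      exact_mod_cast this
    have := Nat.le_of_dvd two_pos ((ZMod.natCast_eq_zero_iff 2 (n + 3)).1 h2)
    omega
  · rw [dist_eq_one_iff_adj.2 (cycleGraph_adj.2 (Or.inl (by ring))),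
      dist_eq_one_iff_adj.2 (cycleGraph_adj.2 (Or.inr (by ring)))]

theorem cycleGraph_exists_resolving_antipode {m : ℕ} (hm : Odd m) (h3 : 3 ≤ m) (t : Fin m) :
    ∃ a, (∀ x, (cycleGraph m).dist x a ≤ (cycleGraph m).dist t a) ∧
      ∀ x y, (cycleGraph m).dist x t = (cycleGraph m).dist y t →
        (cycleGraph m).dist x a = (cycleGraph m).dist y a → x = y := by
  obtain ⟨n, rfl⟩ : ∃ n, m = n + 2 := ⟨m - 2, by omega⟩
  obtain ⟨k, hk⟩ := hm
  have hdist : ∀ x, (cycleGraph (n + 2)).dist x (t + k) =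
      ((k : ZMod (n + 2)) - ZMod.finEquiv (n + 2) (x - t)).valMinAbs.natAbs := by
    intro x
    rw [cycleGraph_dist, ← map_natCast (ZMod.finEquiv (n + 2)), ← map_sub, sub_sub_eq_add_sub,
      add_comm (k : Fin (n + 2))]
  refine ⟨t + k, fun x => ?_, fun x y hxy hxy' => ?_⟩
  · rw [hdist, hdist, sub_self, map_zero, sub_zero,
      ZMod.valMinAbs_natCast_of_le_half (by omega), Int.natAbs_natCast]
    exact (ZMod.natAbs_valMinAbs_le _).trans (by omega)
  · rw [hdist, hdist] at hxy'
    rw [cycleGraph_dist, cycleGraph_dist, ← neg_sub x, ← neg_sub y, map_neg, map_neg,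
      ZMod.natAbs_valMinAbs_neg, ZMod.natAbs_valMinAbs_neg] at hxy
    simpa using (ZMod.finEquiv (n + 2)).injective
      (ZMod.eq_of_natAbs_valMinAbs_eq_of_natAbs_valMinAbs_sub_eq hk hxy hxy')

end SimpleGraph

theorem metricDim_le_card {V : Type*} [Fintype V] {G : SimpleGraph V} {W : Finset V}
    (hW : resolves G W) : metricDim G ≤ W.card :=
  Nat.sInf_le ⟨W, hW, rfl⟩

theorem le_metricDim {V : Type*} [Fintype V] {G : SimpleGraph V} {k : ℕ}
    (hG : ∃ W, resolves G W) (h : ∀ W, resolves G W → k ≤ W.card) : k ≤ metricDim G :=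
  let ⟨W, hW⟩ := hG
  le_csInf ⟨W.card, W, hW, rfl⟩ fun _ ⟨W, hW, hk⟩ => hk ▸ h W hW

open Classical in
noncomputable def vertexAmalRetract {ι V : Type*} {Vi : ι → Type*} (f : ∀ i, Vi i → V)
    (v0 : ∀ i, Vi i) (i : ι) (a : V) : Vi i :=
  if h : ∃ x, f i x = a then h.choose else v0 i

namespace IsVertexAmalMap

variable {ι V : Type*} {Vi : ι → Type*} {Gs : ∀ i, SimpleGraph (Vi i)} {v0 : ∀ i, Vi i}
  {G : SimpleGraph V} {v : V} {f : ∀ i, Vi i → V}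

theorem injective (hf : IsVertexAmalMap Gs v0 G v f) (i : ι) : Function.Injective (f i) := hf.1 i

theorem apply_base (hf : IsVertexAmalMap Gs v0 G v f) (i : ι) : f i (v0 i) = v := hf.2.1 i

theorem adj_iff (hf : IsVertexAmalMap Gs v0 G v f) {i : ι} {x y : Vi i} :
    G.Adj (f i x) (f i y) ↔ (Gs i).Adj x y := hf.2.2.1 i x y

theorem exists_apply_eq (hf : IsVertexAmalMap Gs v0 G v f) (a : V) : ∃ i x, f i x = a :=
  hf.2.2.2.2.1 a

theorem exists_of_adj (hf : IsVertexAmalMap Gs v0 G v f) {a b : V} (hab : G.Adj a b) :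
    ∃ i x y, f i x = a ∧ f i y = b :=
  hf.2.2.2.2.2 a b hab

theorem apply_eq_base_iff (hf : IsVertexAmalMap Gs v0 G v f) {i : ι} {x : Vi i} :
    f i x = v ↔ x = v0 i := by
  rw [← hf.apply_base i, (hf.injective i).eq_iff]

theorem apply_ne_apply (hf : IsVertexAmalMap Gs v0 G v f) {i j : ι} (hij : i ≠ j) {x : Vi i}
    (hx : x ≠ v0 i) (y : Vi j) : f i x ≠ f j y :=
  fun h => hx (hf.apply_eq_base_iff.1 (hf.2.2.2.1 i j x y hij h))

@[simps]
def hom (hf : IsVertexAmalMap Gs v0 G v f) (i : ι) : Gs i →g G :=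
  ⟨f i, hf.adj_iff.2⟩

theorem connected (hf : IsVertexAmalMap Gs v0 G v f) (hGs : ∀ i, (Gs i).Connected) :
    G.Connected := by
  have hv : ∀ a, G.Reachable a v := fun a => by
    obtain ⟨i, x, rfl⟩ := hf.exists_apply_eq a
    simpa only [hom_apply, hf.apply_base] using ((hGs i) x (v0 i)).map (hf.hom i)
  exact (connected_iff_exists_forall_reachable G).2 ⟨v, fun a => (hv a).symm⟩

theorem retract_apply_self (hf : IsVertexAmalMap Gs v0 G v f) (i : ι) (x : Vi i) :
    vertexAmalRetract f v0 i (f i x) = x := by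
  have h : ∃ y, f i y = f i x := ⟨x, rfl⟩
  rw [vertexAmalRetract, dif_pos h]
  exact hf.injective i h.choose_spec

theorem retract_apply_of_ne (hf : IsVertexAmalMap Gs v0 G v f) {i j : ι} (hji : j ≠ i)
    (y : Vi j) : vertexAmalRetract f v0 i (f j y) = v0 i := by
  by_cases hy : y = v0 j
  · rw [hy, hf.apply_base, ← hf.apply_base i, hf.retract_apply_self]
  · rw [vertexAmalRetract, dif_neg]
    rintro ⟨x, hx⟩
    exact hf.apply_ne_apply hji hy x hx.symm

theorem exists_retract_adj_of_adj (hf : IsVertexAmalMap Gs v0 G v f) {a b : V}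
    (hab : G.Adj a b) :
    ∃ l, (Gs l).Adj (vertexAmalRetract f v0 l a) (vertexAmalRetract f v0 l b) ∧
      ∀ i, i ≠ l → vertexAmalRetract f v0 i a = vertexAmalRetract f v0 i b := by
  obtain ⟨l, x, y, rfl, rfl⟩ := hf.exists_of_adj hab
  refine ⟨l, ?_, fun i hil => ?_⟩
  · rwa [hf.retract_apply_self, hf.retract_apply_self, ← hf.adj_iff]
  · rw [hf.retract_apply_of_ne hil.symm, hf.retract_apply_of_ne hil.symm]

theorem dist_retract_le_of_adj (hf : IsVertexAmalMap Gs v0 G v f) (hGs : ∀ i, (Gs i).Connected)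
    {a b : V} (hab : G.Adj a b) (i : ι) (z : Vi i) :
    (Gs i).dist z (vertexAmalRetract f v0 i b) ≤
      (Gs i).dist z (vertexAmalRetract f v0 i a) + 1 := by
  obtain ⟨l, hl, hr⟩ := hf.exists_retract_adj_of_adj hab
  by_cases hil : i = l
  · subst hil
    exact (hGs i).dist_triangle.trans_eq (by rw [dist_eq_one_iff_adj.2 hl])
  · rw [hr i hil]
    omega

theorem dist_apply_apply (hf : IsVertexAmalMap Gs v0 G v f) (hGs : ∀ i, (Gs i).Connected)
    (i : ι) (x y : Vi i) : G.dist (f i x) (f i y) = (Gs i).dist x y := by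
  apply le_antisymm
  · obtain ⟨p, hp⟩ := (hGs i).exists_walk_length_eq_dist x y
    simpa [hp] using dist_le (p.map (hf.hom i))
  · simpa [hf.retract_apply_self] using
      ((hf.connected hGs) (f i x) (f i y)).le_add_dist_of_adj_le
        (φ := fun a => (Gs i).dist x (vertexAmalRetract f v0 i a))
        fun a b hab => hf.dist_retract_le_of_adj hGs hab i x

theorem dist_apply_apply_of_ne (hf : IsVertexAmalMap Gs v0 G v f) (hGs : ∀ i, (Gs i).Connected)
    {i j : ι} (hij : i ≠ j) (x : Vi i) (y : Vi j) :
    G.dist (f i x) (f j y) = (Gs i).dist x (v0 i) + (Gs j).dist (v0 j) y := by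
  apply le_antisymm
  · calc G.dist (f i x) (f j y) ≤ G.dist (f i x) v + G.dist v (f j y) :=
          (hf.connected hGs).dist_triangle
      _ = _ := by
          rw [← hf.apply_base i, hf.dist_apply_apply hGs, hf.apply_base i, ← hf.apply_base j,
            hf.dist_apply_apply hGs]
  · have := ((hf.connected hGs) (f i x) (f j y)).le_add_dist_of_adj_le
      (φ := fun a => (Gs i).dist x (vertexAmalRetract f v0 i a) +
        (Gs j).dist (v0 j) (vertexAmalRetract f v0 j a)) fun a b hab => by
        obtain ⟨l, -, hr⟩ := hf.exists_retract_adj_of_adj hab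
        by_cases hil : i = l
        · rw [hr j (hil ▸ hij.symm)]
          linarith [hf.dist_retract_le_of_adj hGs hab i x]
        · rw [hr i hil]
          linarith [hf.dist_retract_le_of_adj hGs hab j (v0 j)]
    simpa [hf.retract_apply_self, hf.retract_apply_of_ne hij, hf.retract_apply_of_ne hij.symm]
      using this

theorem resolves_image (hf : IsVertexAmalMap Gs v0 G v f) (hGs : ∀ i, (Gs i).Connected)
    [Fintype ι] [Nontrivial ι] [DecidableEq V] (a : ∀ i, Vi i)
    (hecc : ∀ i x, (Gs i).dist x (a i) ≤ (Gs i).dist (v0 i) (a i))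
    (hres : ∀ i x y, (Gs i).dist x (v0 i) = (Gs i).dist y (v0 i) →
      (Gs i).dist x (a i) = (Gs i).dist y (a i) → x = y) :
    resolves G (Finset.univ.image fun i => f i (a i)) := by
  intro u u' hd
  replace hd : ∀ l, G.dist u (f l (a l)) = G.dist u' (f l (a l)) :=
    fun l => hd _ (Finset.mem_image_of_mem _ (Finset.mem_univ l))
  obtain ⟨i, x, rfl⟩ := hf.exists_apply_eq u
  obtain ⟨j, y, rfl⟩ := hf.exists_apply_eq u'
  by_cases hij : i = j
  · subst hij
    obtain ⟨l, hli⟩ := exists_ne i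
    have hl := hd l
    have hi := hd i
    rw [hf.dist_apply_apply_of_ne hGs hli.symm, hf.dist_apply_apply_of_ne hGs hli.symm] at hl
    rw [hf.dist_apply_apply hGs, hf.dist_apply_apply hGs] at hi
    rw [hres i x y (by omega) hi]
  · -- the paths to `a i` and `a j` run through `v`, which `hecc` only allows if both ends are `v`
    have hi := hd i
    have hj := hd j
    rw [hf.dist_apply_apply hGs, hf.dist_apply_apply_of_ne hGs (Ne.symm hij)] at hi
    rw [hf.dist_apply_apply hGs, hf.dist_apply_apply_of_ne hGs hij] at hj
    have hx := (hGs i).dist_eq_zero_iff.1 (by linarith [hecc j y] : (Gs i).dist x (v0 i) = 0)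
    have hy := (hGs j).dist_eq_zero_iff.1 (by linarith [hecc i x] : (Gs j).dist y (v0 j) = 0)
    rw [hx, hy, hf.apply_base, hf.apply_base]

theorem card_le_card_of_resolves (hf : IsVertexAmalMap Gs v0 G v f)
    (hGs : ∀ i, (Gs i).Connected) [Fintype ι] (p q : ∀ i, Vi i) (hpq : ∀ i, p i ≠ q i)
    (hd : ∀ i, (Gs i).dist (p i) (v0 i) = (Gs i).dist (q i) (v0 i)) {W : Finset V}
    (hW : resolves G W) : Fintype.card ι ≤ W.card := by
  have hmeets : ∀ i, ∃ x, x ≠ v0 i ∧ f i x ∈ W := by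
    intro i
    by_contra! hW'
    refine hpq i (hf.injective i (hW _ _ fun w hw => ?_))
    obtain ⟨j, z, rfl⟩ := hf.exists_apply_eq w
    by_cases hji : j = i
    · subst hji
      obtain rfl : z = v0 j := by_contra fun hz => hW' z hz hw
      rw [hf.dist_apply_apply hGs, hf.dist_apply_apply hGs, hd]
    · rw [hf.dist_apply_apply_of_ne hGs (Ne.symm hji), hf.dist_apply_apply_of_ne hGs (Ne.symm hji),
        hd]
  choose x hx hxW using hmeets
  calc Fintype.card ι = (Finset.univ : Finset ι).card := rfl
    _ ≤ W.card := Finset.card_le_card_of_injOn (fun i => f i (x i)) (fun i _ => hxW i)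
        fun i _ j _ h => by_contra fun hij => hf.apply_ne_apply hij (hx i) (x j) h

end IsVertexAmalMap

theorem stmt15 {V : Type*} [Fintype V] (n : ℕ) (hn : 2 ≤ n) (c : Fin n → ℕ)
    (hc3 : ∀ i, 3 ≤ c i) (hodd : ∀ i, Odd (c i))
    (v0 : ∀ i, Fin (c i)) (G : SimpleGraph V) (v : V)
    (h : IsVertexAmal (fun i => SimpleGraph.cycleGraph (c i)) v0 G v) :
    metricDim G = n := by
  classical
  obtain ⟨f, hf⟩ := h
  have hGs : ∀ i, (cycleGraph (c i)).Connected := fun i =>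
    @Connected.mk _ _ cycleGraph_preconnected ⟨v0 i⟩
  have : Nontrivial (Fin n) := Fin.nontrivial_iff_two_le.2 hn
  choose a hecc hres using fun i => cycleGraph_exists_resolving_antipode (hodd i) (hc3 i) (v0 i)
  choose p q hpq hd using fun i => cycleGraph_exists_ne_dist_eq (hc3 i) (v0 i)
  have hW := hf.resolves_image hGs a hecc hres
  apply le_antisymm
  · calc metricDim G ≤ _ := metricDim_le_card hW
      _ ≤ n := Finset.card_image_le.trans (by simp)
  · simpa using le_metricDim ⟨_, hW⟩ fun W hW => hf.card_le_card_of_resolves hGs p q hpq hd hW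
end
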